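/- Let p be a prime, g ∈ F_p^* of order t, and A ⊆ F_p^* the subgroup generated by g. Then for any N ≤ t and λ with gcd(λ,p)=1, |Σ_{n=1}^{N} e_p(λ g^n)| ≪ p^{1/4} t^{−1/4} E₊(A,A)^{1/4} log t. -/

import Mathlib

open Finset

/-- The standard additive character of `ZMod p`. -/
noncomputable def ep (p : ℕ) (z : ZMod p) : ℂ :=
  Complex.exp (2 * Real.pi * Complex.I * (z.val : ℂ) / (p : ℂ))

open Complex

noncomputable def ee (t : ℕ) (m : ℤ) : ℂ := Complex.exp (2 * Real.pi * Complex.I * m / t)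




lemma ee_add (t : ℕ) (a b : ℤ) : ee t (a + b) = ee t a * ee t b := by
  rw [ee, ee, ee, ← Complex.exp_add]
  congr 1
  push_cast
  ring

lemma ee_zero (t : ℕ) : ee t 0 = 1 := by simp [ee]

lemma ee_eq (t : ℕ) (m : ℤ) :
    ee t m = Complex.exp (((2 * Real.pi * m / t : ℝ) : ℂ) * Complex.I) := by
  rw [ee]; congr 1; push_cast; ring

lemma norm_ee (t : ℕ) (m : ℤ) : ‖ee t m‖ = 1 := by
  rw [ee_eq]; exact Complex.norm_exp_ofReal_mul_I _

lemma ee_int_mul (t : ℕ) (ht : t ≠ 0) (q : ℤ) : ee t (t * q) = 1 := by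
  have htc : (t : ℂ) ≠ 0 := Nat.cast_ne_zero.mpr ht
  rw [ee]
  push_cast
  rw [show 2 * (Real.pi : ℂ) * Complex.I * ((t:ℂ) * (q:ℂ)) / t
      = (q : ℂ) * (2 * Real.pi * Complex.I) by field_simp]
  exact Complex.exp_int_mul_two_pi_mul_I q

lemma ee_congr (t : ℕ) (ht : t ≠ 0) {a b : ℤ} (h : a % t = b % t) : ee t a = ee t b := by
  obtain ⟨q, hq⟩ := Int.ModEq.dvd (h : a ≡ b [ZMOD (t:ℤ)])
  have : b = a + t * q := by linarith
  rw [this, ee_add, ee_int_mul t ht, mul_one]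

lemma ee_ne_one (t : ℕ) (ht : t ≠ 0) {m : ℤ} (hm : ¬ (t : ℤ) ∣ m) : ee t m ≠ 1 := by
  intro h
  rw [ee, Complex.exp_eq_one_iff] at h
  obtain ⟨n, hn⟩ := h
  apply hm
  refine ⟨n, ?_⟩
  have htc : (t : ℂ) ≠ 0 := Nat.cast_ne_zero.mpr ht
  have hc : (2 * (Real.pi : ℂ) * Complex.I) ≠ 0 := by
    simp [Real.pi_ne_zero, Complex.I_ne_zero]
  field_simp at hn
  have : (m : ℂ) = t * n := by
    apply mul_left_cancel₀ hc
    linear_combination (2 * (Real.pi : ℂ) * Complex.I) * hn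
  exact_mod_cast this

lemma ee_nat_mul (t : ℕ) (k : ℕ) (d : ℤ) : ee t ((k : ℤ) * d) = (ee t d) ^ k := by
  rw [ee]
  push_cast
  rw [show 2 * (Real.pi : ℂ) * Complex.I * ((k:ℂ) * (d:ℂ)) / t
      = (k : ℂ) * (2 * Real.pi * Complex.I * d / t) by ring, Complex.exp_nat_mul]
  rfl

lemma sum_ee_geom (t : ℕ) (ht : t ≠ 0) (d : ℤ) :
    ∑ k ∈ range t, ee t ((k : ℤ) * d) = if (t : ℤ) ∣ d then (t : ℂ) else 0 := by
  split_ifs with h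
  · obtain ⟨q, rfl⟩ := h
    have : ∀ k ∈ range t, ee t ((k : ℤ) * ((t:ℤ) * q)) = 1 := by
      intro k _
      rw [show (k : ℤ) * ((t:ℤ) * q) = (t : ℤ) * (k * q) by ring, ee_int_mul t ht]
    rw [Finset.sum_congr rfl this]
    simp
  · have hz : ee t d ≠ 1 := ee_ne_one t ht h
    simp_rw [ee_nat_mul]
    rw [geom_sum_eq hz]
    have : ee t d ^ t = 1 := by
      rw [← ee_nat_mul, show ((t:ℕ) : ℤ) * d = (t:ℤ) * d from rfl, ee_int_mul t ht]
    rw [this]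
    simp



lemma ep_eq (p : ℕ) (z : ZMod p) : ep p z = ee p (z.val : ℤ) := by
  rw [ep, ee]; norm_num

lemma ep_add (p : ℕ) (hp : p ≠ 0) (a b : ZMod p) : ep p (a + b) = ep p a * ep p b := by
  haveI : NeZero p := ⟨hp⟩
  rw [ep_eq, ep_eq, ep_eq, ← ee_add]
  apply ee_congr p hp
  rw [ZMod.val_add]
  push_cast
  rw [Int.emod_emod_of_dvd _ dvd_rfl]

lemma ep_zero (p : ℕ) (hp : p ≠ 0) : ep p 0 = 1 := by
  haveI : NeZero p := ⟨hp⟩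
  rw [ep_eq, ZMod.val_zero]
  exact ee_zero p

lemma norm_ep (p : ℕ) (z : ZMod p) : ‖ep p z‖ = 1 := by rw [ep_eq]; exact norm_ee _ _

lemma conj_ep (p : ℕ) (hp : p ≠ 0) (z : ZMod p) :
    (starRingEnd ℂ) (ep p z) = ep p (-z) := by
  have h1 : ep p z * ep p (-z) = 1 := by
    rw [← ep_add p hp, add_neg_cancel, ep_zero p hp]
  have h2 : ‖ep p z‖ = 1 := norm_ep p z
  rw [← Complex.inv_eq_conj h2]
  exact inv_eq_of_mul_eq_one_right h1

lemma sum_ep_mul (p : ℕ) [hfact : Fact p.Prime] (x : ZMod p) :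
    ∑ μ : ZMod p, ep p (μ * x) = if x = 0 then (p : ℂ) else 0 := by
  have hp : p.Prime := hfact.out
  split_ifs with h
  · subst h
    simp only [mul_zero, ep_zero p hp.ne_zero]
    simp [ZMod.card]
  · have key : ∑ μ : ZMod p, ep p μ = 0 := by
      have h1 : ep p 1 ≠ 1 := by
        rw [ep_eq, ZMod.val_one p]
        apply ee_ne_one p hp.ne_zero
        intro hd
        have h2 := Int.le_of_dvd one_pos hd
        have h3 := hp.one_lt
        omega
      have h2 : ep p 1 * ∑ μ : ZMod p, ep p μ = ∑ μ : ZMod p, ep p μ := by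
        rw [Finset.mul_sum]
        simp_rw [← ep_add p hp.ne_zero]
        exact Fintype.sum_equiv (Equiv.addLeft (1 : ZMod p)) _ _ (fun μ => rfl)
      by_contra hS
      exact h1 (mul_right_cancel₀ hS (by rw [h2, one_mul]))
    calc ∑ μ : ZMod p, ep p (μ * x) = ∑ μ : ZMod p, ep p μ :=
          Fintype.sum_equiv (Equiv.mulRight₀ x h) _ _ (fun μ => rfl)
      _ = 0 := key

set_option maxHeartbeats 1600000


lemma sum_range_shift (f : ℕ → ℂ) (t : ℕ) (hf : f t = f 0) :
    ∑ n ∈ range t, f (n + 1) = ∑ n ∈ range t, f n := by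
  have h1 := Finset.sum_range_succ f t
  have h2 := Finset.sum_range_succ' f t
  rw [h1] at h2
  linear_combination -h2 + hf

lemma moment (p : ℕ) [hfact : Fact p.Prime] (g l : (ZMod p)ˣ) (t : ℕ) (hg : orderOf g = t)
    (ht : t ≠ 0) (k : ℕ) :
    (t : ℝ) * ‖∑ n ∈ range t, ee t ((k : ℤ) * (n : ℤ)) * ep p ((l : ZMod p) * (g : ZMod p) ^ n)‖ ^ 4
      ≤ (p : ℝ) * ((Finset.addEnergy ((Finset.range t).image fun n => (g : ZMod p) ^ n)
            ((Finset.range t).image fun n => (g : ZMod p) ^ n) : ℕ) : ℝ) := by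
  have hp : p.Prime := hfact.out
  have hp0 : p ≠ 0 := hp.ne_zero
  set A : Finset (ZMod p) := (Finset.range t).image fun n => (g : ZMod p) ^ n with hA
  set x : ℕ → ZMod p := fun n => (g : ZMod p) ^ n with hx
  set w : ℕ → ℂ := fun n => ee t ((k : ℤ) * (n : ℤ)) with hw
  set S : ZMod p → ℂ := fun μ => ∑ n ∈ range t, w n * ep p (μ * x n) with hS
  have hSl : ∑ n ∈ range t, ee t ((k : ℤ) * (n : ℤ)) * ep p ((l : ZMod p) * (g : ZMod p) ^ n)
      = S (l : ZMod p) := rfl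
  rw [hSl]
  -- basic facts
  have hxt : x t = 1 := by
    show (g : ZMod p) ^ t = 1
    rw [← Units.val_pow_eq_pow_val, ← hg, pow_orderOf_eq_one, Units.val_one]
  have hxper : ∀ n, x (n + t) = x n := by
    intro n
    show (g : ZMod p) ^ (n + t) = (g : ZMod p) ^ n
    have : (g : ZMod p) ^ t = 1 := hxt
    rw [pow_add, this, mul_one]
  have hinj : ∀ a ∈ range t, ∀ b ∈ range t, x a = x b → a = b := by
    intro a ha b hb hab
    have hab' : g ^ a = g ^ b := Units.ext (by simpa [hx] using hab)
    exact pow_injOn_Iio_orderOf (by simpa [hg] using mem_range.mp ha)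
      (by simpa [hg] using mem_range.mp hb) hab'
  have hwnorm : ∀ n, ‖w n‖ = 1 := fun n => norm_ee t _
  -- rotation invariance
  have hrot1 : ∀ μ : ZMod p, ‖S (μ * x 1)‖ = ‖S μ‖ := by
    intro μ
    have hterm : ∀ n : ℕ, w n * ep p ((μ * x 1) * x n)
        = ee t (-(k : ℤ)) * (w (n + 1) * ep p (μ * x (n + 1))) := by
      intro n
      have hxx : (μ * x 1) * x n = μ * x (n + 1) := by
        show μ * (g : ZMod p) ^ 1 * (g : ZMod p) ^ n = μ * (g : ZMod p) ^ (n + 1)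
        rw [pow_one, pow_succ]
        ring
      have hwn : ee t (-(k : ℤ)) * w (n + 1) = w n := by
        show ee t (-(k:ℤ)) * ee t ((k:ℤ) * ((n+1 : ℕ) : ℤ)) = ee t ((k:ℤ) * (n:ℤ))
        rw [← ee_add]
        apply congrArg
        push_cast
        ring
      rw [hxx, ← hwn]
      ring
    have hshift : (fun j => w j * ep p (μ * x j)) t = (fun j => w j * ep p (μ * x j)) 0 := by
      have hwt : w t = 1 := by
        show ee t ((k:ℤ) * (t:ℤ)) = 1
        rw [show (k:ℤ) * (t:ℤ) = (t:ℤ) * k by ring, ee_int_mul t ht]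
      have hw0 : w 0 = 1 := by
        show ee t ((k:ℤ) * ((0:ℕ):ℤ)) = 1
        rw [show ((k:ℤ) * ((0:ℕ):ℤ)) = 0 by simp, ee_zero]
      have hx0 : x 0 = 1 := pow_zero _
      show w t * ep p (μ * x t) = w 0 * ep p (μ * x 0)
      rw [hwt, hw0, hxt, hx0]
    have h2 : S (μ * x 1) = ee t (-(k : ℤ)) * S μ := by
      show ∑ n ∈ range t, w n * ep p ((μ * x 1) * x n) = ee t (-(k:ℤ)) * S μ
      rw [Finset.sum_congr rfl (fun n _ => hterm n), ← Finset.mul_sum]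
      congr 1
      exact sum_range_shift (fun j => w j * ep p (μ * x j)) t hshift
    rw [h2, norm_mul, norm_ee, one_mul]
  have hrotm : ∀ (m : ℕ) (μ : ZMod p), ‖S (μ * x m)‖ = ‖S μ‖ := by
    intro m
    induction m with
    | zero =>
      intro μ
      have h0 : x 0 = 1 := pow_zero _
      rw [h0, mul_one]
    | succ m ih =>
      intro μ
      have hh : μ * x (m + 1) = (μ * x m) * x 1 := by
        show μ * (g : ZMod p) ^ (m+1) = μ * (g : ZMod p) ^ m * (g : ZMod p) ^ 1
        rw [pow_one, pow_succ]
        ring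
      rw [hh, hrot1, ih]
  -- pigeonhole over the orbit
  have hstepC : (t : ℝ) * ‖S (l : ZMod p)‖ ^ 4 ≤ ∑ ν : ZMod p, ‖S ν‖ ^ 4 := by
    have h1 : (t : ℝ) * ‖S (l : ZMod p)‖ ^ 4
        = ∑ m ∈ range t, ‖S ((l : ZMod p) * x m)‖ ^ 4 := by
      rw [Finset.sum_congr rfl (fun m _ => by rw [hrotm m])]
      rw [Finset.sum_const, card_range, nsmul_eq_mul]
    have h2 : ∑ m ∈ range t, ‖S ((l : ZMod p) * x m)‖ ^ 4
        = ∑ ν ∈ (range t).image (fun m => (l : ZMod p) * x m), ‖S ν‖ ^ 4 := by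
      rw [Finset.sum_image]
      intro a ha b hb hab
      exact hinj a ha b hb (mul_left_cancel₀ (Units.ne_zero l) hab)
    rw [h1, h2]
    exact Finset.sum_le_sum_of_subset_of_nonneg (Finset.subset_univ _)
      (fun i _ _ => by positivity)
  -- fourth moment over all frequencies
  set T2 : Finset (ℕ × ℕ) := range t ×ˢ range t with hT2
  have hU : ∀ μ : ZMod p, S μ * S μ
      = ∑ q ∈ T2, (w q.1 * w q.2) * ep p (μ * (x q.1 + x q.2)) := by
    intro μ
    show (∑ n ∈ range t, w n * ep p (μ * x n)) * (∑ n ∈ range t, w n * ep p (μ * x n)) = _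
    rw [Finset.sum_mul_sum]
    conv_rhs => rw [hT2, Finset.sum_product]
    apply Finset.sum_congr rfl; intro a _
    apply Finset.sum_congr rfl; intro b _
    have hee : ep p (μ * x a) * ep p (μ * x b) = ep p (μ * (x a + x b)) := by
      rw [← ep_add p hp0]
      apply congrArg
      ring
    calc (w a * ep p (μ * x a)) * (w b * ep p (μ * x b))
        = (w a * w b) * (ep p (μ * x a) * ep p (μ * x b)) := by ring
      _ = (w a * w b) * ep p (μ * (x a + x b)) := by rw [hee]
  have hQ : ∀ μ : ZMod p, ((‖S μ‖ ^ 4 : ℝ) : ℂ)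
      = ∑ q ∈ T2 ×ˢ T2, ((w q.1.1 * w q.1.2) * (starRingEnd ℂ) (w q.2.1 * w q.2.2))
          * ep p (μ * ((x q.1.1 + x q.1.2) - (x q.2.1 + x q.2.2))) := by
    intro μ
    have e1 : ((‖S μ‖ ^ 4 : ℝ) : ℂ) = (S μ * S μ) * (starRingEnd ℂ) (S μ * S μ) := by
      rw [Complex.mul_conj, Complex.normSq_eq_norm_sq]
      norm_cast
      rw [norm_mul]
      ring
    rw [e1, hU, map_sum, Finset.sum_mul_sum]
    conv_rhs => rw [Finset.sum_product]
    apply Finset.sum_congr rfl; intro q1 _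
    apply Finset.sum_congr rfl; intro q2 _
    have hconj : (starRingEnd ℂ) ((w q2.1 * w q2.2) * ep p (μ * (x q2.1 + x q2.2)))
        = (starRingEnd ℂ) (w q2.1 * w q2.2) * ep p (-(μ * (x q2.1 + x q2.2))) := by
      rw [map_mul, conj_ep p hp0]
    have hee : ep p (μ * (x q1.1 + x q1.2)) * ep p (-(μ * (x q2.1 + x q2.2)))
        = ep p (μ * ((x q1.1 + x q1.2) - (x q2.1 + x q2.2))) := by
      rw [← ep_add p hp0]
      apply congrArg
      ring
    rw [hconj]
    calc ((w q1.1 * w q1.2) * ep p (μ * (x q1.1 + x q1.2)))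
          * ((starRingEnd ℂ) (w q2.1 * w q2.2) * ep p (-(μ * (x q2.1 + x q2.2))))
        = ((w q1.1 * w q1.2) * (starRingEnd ℂ) (w q2.1 * w q2.2))
          * (ep p (μ * (x q1.1 + x q1.2)) * ep p (-(μ * (x q2.1 + x q2.2)))) := by ring
      _ = _ := by rw [hee]
  have hswap : ∑ ν : ZMod p, ((‖S ν‖ ^ 4 : ℝ) : ℂ)
      = ∑ q ∈ T2 ×ˢ T2, ((w q.1.1 * w q.1.2) * (starRingEnd ℂ) (w q.2.1 * w q.2.2))
          * (if (x q.1.1 + x q.1.2) - (x q.2.1 + x q.2.2) = 0 then (p : ℂ) else 0) := by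
    rw [Finset.sum_congr rfl (fun ν _ => hQ ν), Finset.sum_comm]
    apply Finset.sum_congr rfl; intro q _
    rw [← Finset.mul_sum, sum_ep_mul p]
  have habs : ∀ q : (ℕ × ℕ) × (ℕ × ℕ),
      ‖((w q.1.1 * w q.1.2) * (starRingEnd ℂ) (w q.2.1 * w q.2.2))
          * (if (x q.1.1 + x q.1.2) - (x q.2.1 + x q.2.2) = 0 then (p : ℂ) else 0)‖
      = (if (x q.1.1 + x q.1.2) - (x q.2.1 + x q.2.2) = 0 then (p : ℝ) else 0) := by
    intro q
    rw [norm_mul, norm_mul, RCLike.norm_conj, norm_mul, norm_mul,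
      hwnorm, hwnorm, hwnorm, hwnorm]
    split_ifs
    · simp
    · simp
  have hcount : ∑ q ∈ T2 ×ˢ T2,
        (if (x q.1.1 + x q.1.2) - (x q.2.1 + x q.2.2) = 0 then (p : ℝ) else 0)
      = (p : ℝ) * (((T2 ×ˢ T2).filter
          (fun q => (x q.1.1 + x q.1.2) - (x q.2.1 + x q.2.2) = 0)).card : ℝ) := by
    rw [Finset.sum_ite, Finset.sum_const, Finset.sum_const_zero, add_zero, nsmul_eq_mul]
    ring
  have henergy : Finset.addEnergy A A
      = (((A ×ˢ A) ×ˢ A ×ˢ A).filter fun z => z.1.1 + z.2.1 = z.1.2 + z.2.2).card := rfl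
  have hcard : (((T2 ×ˢ T2).filter
        (fun q => (x q.1.1 + x q.1.2) - (x q.2.1 + x q.2.2) = 0)).card : ℕ)
      ≤ Finset.addEnergy A A := by
    rw [henergy]
    apply Finset.card_le_card_of_injOn
      (fun q => ((x q.1.1, x q.2.1), (x q.1.2, x q.2.2)))
    · intro q hq
      simp only [Finset.mem_coe, Finset.mem_filter, Finset.mem_product, hT2, Finset.mem_range] at hq
      obtain ⟨⟨⟨h11, h12⟩, h21, h22⟩, heq⟩ := hq
      have hmem : ∀ n, n < t → x n ∈ A := by
        intro n hn
        rw [hA]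
        exact Finset.mem_image_of_mem x (Finset.mem_range.mpr hn)
      simp only [Finset.mem_coe, Finset.mem_filter, Finset.mem_product]
      refine ⟨⟨⟨hmem _ h11, hmem _ h21⟩, hmem _ h12, hmem _ h22⟩, ?_⟩
      exact sub_eq_zero.mp heq
    · intro q hq q' hq' h
      simp only [Finset.mem_coe, Finset.mem_filter, Finset.mem_product, hT2,
        Finset.mem_range] at hq hq'
      obtain ⟨⟨⟨h11, h12⟩, h21, h22⟩, -⟩ := hq
      obtain ⟨⟨⟨h11', h12'⟩, h21', h22'⟩, -⟩ := hq'
      simp only [Prod.mk.injEq] at h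
      obtain ⟨⟨e1, e2⟩, e3, e4⟩ := h
      have m1 : q.1.1 = q'.1.1 := hinj _ (mem_range.mpr h11) _ (mem_range.mpr h11') e1
      have m2 : q.2.1 = q'.2.1 := hinj _ (mem_range.mpr h21) _ (mem_range.mpr h21') e2
      have m3 : q.1.2 = q'.1.2 := hinj _ (mem_range.mpr h12) _ (mem_range.mpr h12') e3
      have m4 : q.2.2 = q'.2.2 := hinj _ (mem_range.mpr h22) _ (mem_range.mpr h22') e4
      exact Prod.ext (Prod.ext m1 m3) (Prod.ext m2 m4)
  have hsum_le : ∑ ν : ZMod p, ‖S ν‖ ^ 4 ≤ (p : ℝ) * ((Finset.addEnergy A A : ℕ) : ℝ) := by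
    have h0 : ((∑ ν : ZMod p, ‖S ν‖ ^ 4 : ℝ) : ℂ) = ∑ ν : ZMod p, ((‖S ν‖ ^ 4 : ℝ) : ℂ) := by
      push_cast
      rfl
    have h1 : ∑ ν : ZMod p, ‖S ν‖ ^ 4 = ‖∑ ν : ZMod p, ((‖S ν‖ ^ 4 : ℝ) : ℂ)‖ := by
      rw [← h0, _root_.Complex.norm_real, Real.norm_eq_abs, _root_.abs_of_nonneg (by positivity)]
    calc ∑ ν : ZMod p, ‖S ν‖ ^ 4
        = ‖∑ q ∈ T2 ×ˢ T2, ((w q.1.1 * w q.1.2) * (starRingEnd ℂ) (w q.2.1 * w q.2.2))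
            * (if (x q.1.1 + x q.1.2) - (x q.2.1 + x q.2.2) = 0 then (p : ℂ) else 0)‖ := by
          rw [h1, hswap]
      _ ≤ ∑ q ∈ T2 ×ˢ T2, ‖((w q.1.1 * w q.1.2) * (starRingEnd ℂ) (w q.2.1 * w q.2.2))
            * (if (x q.1.1 + x q.1.2) - (x q.2.1 + x q.2.2) = 0 then (p : ℂ) else 0)‖ :=
          norm_sum_le _ _
      _ = ∑ q ∈ T2 ×ˢ T2,
            (if (x q.1.1 + x q.1.2) - (x q.2.1 + x q.2.2) = 0 then (p : ℝ) else 0) :=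
          Finset.sum_congr rfl (fun q _ => habs q)
      _ = (p : ℝ) * (((T2 ×ˢ T2).filter
            (fun q => (x q.1.1 + x q.1.2) - (x q.2.1 + x q.2.2) = 0)).card : ℝ) := hcount
      _ ≤ (p : ℝ) * ((Finset.addEnergy A A : ℕ) : ℝ) := by
          apply mul_le_mul_of_nonneg_left _ (by positivity)
          exact_mod_cast hcard
  exact le_trans hstepC hsum_le

lemma norm_exp_sub_one (θ : ℝ) :
    ‖Complex.exp ((θ : ℂ) * Complex.I) - 1‖ = 2 * |Real.sin (θ / 2)| := by
  have hre : (Complex.exp ((θ : ℂ) * Complex.I) - 1).re = Real.cos θ - 1 := by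
    simp [Complex.exp_ofReal_mul_I_re]
  have him : (Complex.exp ((θ : ℂ) * Complex.I) - 1).im = Real.sin θ := by
    simp [Complex.exp_ofReal_mul_I_im]
  rw [Complex.norm_def, Complex.normSq_apply, hre, him]
  have hsin : Real.sin θ ^ 2 + Real.cos θ ^ 2 = 1 := Real.sin_sq_add_cos_sq θ
  have hhalf : Real.sin (θ / 2) ^ 2 = 1 / 2 - Real.cos (2 * (θ / 2)) / 2 :=
    Real.sin_sq_eq_half_sub (θ / 2)
  rw [show 2 * (θ / 2) = θ by ring] at hhalf
  have : (Real.cos θ - 1) * (Real.cos θ - 1) + Real.sin θ * Real.sin θ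
      = (2 * |Real.sin (θ / 2)|) ^ 2 := by
    rw [mul_pow, _root_.sq_abs]
    nlinarith [hsin, hhalf]
  rw [this, Real.sqrt_sq (by positivity)]

lemma sin_lower (θ : ℝ) (h0 : 0 ≤ θ) (h1 : θ ≤ 1) :
    2 * θ * (1 - θ) ≤ Real.sin (Real.pi * θ) := by
  have key : ∀ s : ℝ, 0 ≤ s → s ≤ 1 / 2 → 2 * s ≤ Real.sin (Real.pi * s) := by
    intro s hs0 hs1
    have h := Real.mul_le_sin (x := Real.pi * s) (by positivity)
      (by nlinarith [Real.pi_pos])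
    calc 2 * s = 2 / Real.pi * (Real.pi * s) := by
          field_simp
      _ ≤ Real.sin (Real.pi * s) := h
  rcases le_or_gt θ (1 / 2) with hc | hc
  · have := key θ h0 hc
    nlinarith
  · have hs : Real.sin (Real.pi * θ) = Real.sin (Real.pi * (1 - θ)) := by
      rw [show Real.pi * (1 - θ) = Real.pi - Real.pi * θ by ring, Real.sin_pi_sub]
    have := key (1 - θ) (by linarith) (by linarith)
    rw [hs]
    nlinarith

lemma harmonic_sum_bound (t : ℕ) (ht : 2 ≤ t) :
    ∑ k ∈ Finset.Ico 1 t, (1 / (k : ℝ)) ≤ 1 + Real.log t := by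
  have h1 : ∑ k ∈ Finset.Ico 1 t, (1 / (k : ℝ)) = (harmonic (t - 1) : ℝ) := by
    rw [Finset.sum_Ico_eq_sum_range]
    rw [harmonic]
    push_cast
    apply Finset.sum_congr rfl
    intro i _
    rw [one_div, add_comm]
  rw [h1]
  calc (harmonic (t - 1) : ℝ) ≤ 1 + Real.log (t - 1 : ℕ) := harmonic_le_one_add_log _
    _ ≤ 1 + Real.log t := by
        have hle : ((t - 1 : ℕ) : ℝ) ≤ (t : ℝ) := by
          have : t - 1 ≤ t := Nat.sub_le t 1
          exact_mod_cast this
        have hpos : (0 : ℝ) < ((t - 1 : ℕ) : ℝ) := by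
          have : 1 ≤ t - 1 := by omega
          exact_mod_cast Nat.lt_of_lt_of_le Nat.zero_lt_one this
        linarith [Real.log_le_log hpos hle]

lemma sum_reflect (t : ℕ) (f : ℕ → ℝ) :
    ∑ k ∈ Finset.Ico 1 t, f (t - k) = ∑ k ∈ Finset.Ico 1 t, f k := by
  apply Finset.sum_nbij' (fun k => t - k) (fun k => t - k)
  · intro a ha
    simp only [Finset.mem_Ico] at ha ⊢
    omega
  · intro a ha
    simp only [Finset.mem_Ico] at ha ⊢
    omega
  · intro a ha
    simp only [Finset.mem_Ico] at ha
    omega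
  · intro a ha
    simp only [Finset.mem_Ico] at ha
    omega
  · intro a ha
    rfl


theorem stmt_11 :
    ∃ C > 0, ∀ (p : ℕ), p.Prime → ∀ (g l : (ZMod p)ˣ) (t : ℕ), orderOf g = t → 2 ≤ t →
      ∀ N : ℕ, N ≤ t →
      ‖∑ n ∈ Finset.Icc 1 N, ep p ((l : ZMod p) * (g : ZMod p) ^ n)‖
        ≤ C * (p : ℝ) ^ ((1 : ℝ) / 4) * (t : ℝ) ^ (-(1 : ℝ) / 4) *
          ((Finset.addEnergy ((Finset.range t).image fun n => (g : ZMod p) ^ n)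
              ((Finset.range t).image fun n => (g : ZMod p) ^ n) : ℝ)) ^ ((1 : ℝ) / 4) *
          Real.log t := by
  refine ⟨5, by norm_num, ?_⟩
  intro p hp g l t hg ht N hN
  haveI hfact : Fact p.Prime := ⟨hp⟩
  have hp0 : p ≠ 0 := hp.ne_zero
  have ht0 : t ≠ 0 := by omega
  have htR : (0 : ℝ) < t := by
    have : 0 < t := by omega
    exact_mod_cast this
  set E : ℝ := ((Finset.addEnergy ((Finset.range t).image fun n => (g : ZMod p) ^ n)
      ((Finset.range t).image fun n => (g : ZMod p) ^ n) : ℕ) : ℝ) with hE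
  have hE0 : 0 ≤ E := by positivity
  set S : ℕ → ℂ := fun k => ∑ n ∈ range t, ee t ((k : ℤ) * (n : ℤ))
      * ep p ((l : ZMod p) * (g : ZMod p) ^ n) with hS
  set M : ℝ := ((p : ℝ) * E / t) ^ ((1 : ℝ) / 4) with hM
  have hM0 : 0 ≤ M := by positivity
  have hSk : ∀ k : ℕ, ‖S k‖ ≤ M := by
    intro k
    have hmom := moment p g l t hg ht0 k
    have h4 : ‖S k‖ ^ 4 ≤ (p : ℝ) * E / t := by
      rw [le_div_iff₀ htR]
      calc ‖S k‖ ^ 4 * t = t * ‖S k‖ ^ 4 := by ring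
        _ ≤ (p : ℝ) * E := hmom
    have hpow : ((‖S k‖ ^ (4 : ℕ) : ℝ)) ^ ((1 : ℝ) / 4) = ‖S k‖ := by
      rw [← Real.rpow_natCast (‖S k‖) 4, ← Real.rpow_mul (norm_nonneg _)]
      norm_num
    calc ‖S k‖ = ((‖S k‖ ^ (4 : ℕ) : ℝ)) ^ ((1 : ℝ) / 4) := hpow.symm
      _ ≤ M := Real.rpow_le_rpow (by positivity) h4 (by norm_num)
  -- completion identity
  have htc : (t : ℂ) ≠ 0 := Nat.cast_ne_zero.mpr ht0
  have hfm : ∀ m : ℕ, ep p ((l : ZMod p) * (g : ZMod p) ^ m)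
      = (1 / (t : ℂ)) * ∑ k ∈ range t, ee t (-((k : ℤ) * (m : ℤ))) * S k := by
    intro m
    have hswap : ∑ k ∈ range t, ee t (-((k : ℤ) * (m : ℤ))) * S k
        = ∑ n ∈ range t, (∑ k ∈ range t, ee t ((k : ℤ) * ((n : ℤ) - (m : ℤ))))
            * ep p ((l : ZMod p) * (g : ZMod p) ^ n) := by
      calc ∑ k ∈ range t, ee t (-((k : ℤ) * (m : ℤ))) * S k
          = ∑ k ∈ range t, ∑ n ∈ range t, ee t ((k : ℤ) * ((n : ℤ) - (m : ℤ)))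
              * ep p ((l : ZMod p) * (g : ZMod p) ^ n) := by
            apply Finset.sum_congr rfl; intro k _
            rw [hS, Finset.mul_sum]
            apply Finset.sum_congr rfl; intro n _
            rw [← mul_assoc]
            congr 1
            rw [← ee_add]
            apply congrArg
            push_cast
            ring
        _ = ∑ n ∈ range t, ∑ k ∈ range t, ee t ((k : ℤ) * ((n : ℤ) - (m : ℤ)))
              * ep p ((l : ZMod p) * (g : ZMod p) ^ n) := Finset.sum_comm
        _ = ∑ n ∈ range t, (∑ k ∈ range t, ee t ((k : ℤ) * ((n : ℤ) - (m : ℤ))))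
              * ep p ((l : ZMod p) * (g : ZMod p) ^ n) := by
            apply Finset.sum_congr rfl; intro n _
            rw [Finset.sum_mul]
    have hpick : ∀ n ∈ range t,
        (∑ k ∈ range t, ee t ((k : ℤ) * ((n : ℤ) - (m : ℤ))))
            * ep p ((l : ZMod p) * (g : ZMod p) ^ n)
        = if n = m % t then (t : ℂ) * ep p ((l : ZMod p) * (g : ZMod p) ^ n) else 0 := by
      intro n hn
      have hlt : n < t := mem_range.mp hn
      have hiff : ((t : ℤ) ∣ ((n : ℤ) - (m : ℤ))) ↔ n = m % t := by
        constructor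
        · intro hd
          have hmod : m ≡ n [MOD t] := (Nat.modEq_iff_dvd).mpr hd
          have := hmod.symm
          have h2 : n % t = m % t := this
          rwa [Nat.mod_eq_of_lt hlt] at h2
        · intro hnm
          subst hnm
          have : m % t ≡ m [MOD t] := Nat.mod_modEq m t
          exact (Nat.modEq_iff_dvd).mp this.symm
      rw [sum_ee_geom t ht0]
      by_cases hd : (t : ℤ) ∣ ((n : ℤ) - (m : ℤ))
      · rw [if_pos hd, if_pos (hiff.mp hd)]
      · rw [if_neg hd, if_neg (fun hc => hd (hiff.mpr hc)), zero_mul]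
    rw [hswap, Finset.sum_congr rfl hpick,
      Finset.sum_ite_eq' (range t) (m % t)
        (fun n => (t : ℂ) * ep p ((l : ZMod p) * (g : ZMod p) ^ n)),
      if_pos (mem_range.mpr (Nat.mod_lt m (by omega)))]
    have hxm : (g : ZMod p) ^ (m % t) = (g : ZMod p) ^ m := by
      rw [← Units.val_pow_eq_pow_val, ← Units.val_pow_eq_pow_val]
      congr 1
      rw [← hg]
      exact pow_mod_orderOf g m
    rw [hxm]
    field_simp
  have hsum : ∑ m ∈ Finset.Icc 1 N, ep p ((l : ZMod p) * (g : ZMod p) ^ m)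
      = (1 / (t : ℂ)) * ∑ k ∈ range t,
          (∑ m ∈ Finset.Icc 1 N, ee t (-((k : ℤ) * (m : ℤ)))) * S k := by
    rw [Finset.sum_congr rfl (fun m _ => hfm m), ← Finset.mul_sum]
    congr 1
    rw [Finset.sum_comm]
    apply Finset.sum_congr rfl; intro k _
    rw [Finset.sum_mul]
  set G : ℕ → ℂ := fun k => ∑ m ∈ Finset.Icc 1 N, ee t (-((k : ℤ) * (m : ℤ))) with hG
  -- bound on G 0
  have hG0 : ‖G 0‖ ≤ (t : ℝ) := by
    calc ‖G 0‖ ≤ ∑ m ∈ Finset.Icc 1 N, ‖ee t (-((0 : ℤ) * (m : ℤ)))‖ := norm_sum_le _ _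
      _ = ∑ m ∈ Finset.Icc 1 N, 1 := Finset.sum_congr rfl (fun m _ => norm_ee t _)
      _ = (N : ℝ) := by rw [Finset.sum_const, Nat.card_Icc]; simp
      _ ≤ (t : ℝ) := by exact_mod_cast hN
  -- bound on G k for 1 ≤ k < t
  have hGk : ∀ k ∈ Finset.Ico 1 t,
      ‖G k‖ ≤ (t : ℝ) / 2 * (1 / (k : ℝ) + 1 / ((t : ℝ) - (k : ℝ))) := by
    intro k hk
    obtain ⟨hk1, hkt⟩ := Finset.mem_Ico.mp hk
    have hkR : (0 : ℝ) < k := by exact_mod_cast hk1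
    have hktR : (k : ℝ) < t := by exact_mod_cast hkt
    set z : ℂ := ee t (-(k : ℤ)) with hz
    have hzm : ∀ m : ℕ, ee t (-((k : ℤ) * (m : ℤ))) = z ^ m := by
      intro m
      rw [hz, ← ee_nat_mul]
      apply congrArg
      push_cast
      ring
    have hz1 : z ≠ 1 := by
      apply ee_ne_one t ht0
      rw [dvd_neg]
      intro hd
      have hd' : t ∣ k := Int.natCast_dvd_natCast.mp hd
      have := Nat.le_of_dvd (by omega) hd'
      omega
    have hGz : G k = z * ∑ j ∈ range N, z ^ j := by
      rw [hG]
      show ∑ m ∈ Finset.Icc 1 N, ee t (-((k : ℤ) * (m : ℤ))) = _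
      rw [Finset.sum_congr rfl (fun m _ => hzm m)]
      rw [show Finset.Icc 1 N = Finset.Ico 1 (N + 1) by rw [Finset.Ico_add_one_right_eq_Icc]]
      rw [Finset.sum_Ico_eq_sum_range]
      simp only [Nat.add_sub_cancel]
      rw [Finset.mul_sum]
      apply Finset.sum_congr rfl; intro j _
      rw [pow_add, pow_one]
    -- lower bound for |z - 1|
    have hzsub : ‖z - 1‖ = 2 * Real.sin (Real.pi * ((k : ℝ) / t)) := by
      have hθ : z = Complex.exp (((2 * Real.pi * ((-(k : ℤ) : ℤ) : ℝ) / t : ℝ) : ℂ) * Complex.I) :=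
        ee_eq t _
      rw [hθ, norm_exp_sub_one]
      have harg : (2 * Real.pi * ((-(k : ℤ) : ℤ) : ℝ) / t) / 2 = -(Real.pi * ((k : ℝ) / t)) := by
        push_cast
        ring
      rw [harg, Real.sin_neg, abs_neg, _root_.abs_of_nonneg]
      apply Real.sin_nonneg_of_nonneg_of_le_pi
      · positivity
      · exact mul_le_of_le_one_right Real.pi_pos.le ((div_le_one htR).mpr hktR.le)
    have hsin : 2 * ((k : ℝ) / t) * (1 - (k : ℝ) / t) ≤ Real.sin (Real.pi * ((k : ℝ) / t)) :=
      sin_lower _ (by positivity) ((div_le_one htR).mpr hktR.le)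
    have hzpos : (0 : ℝ) < 4 * ((k : ℝ) / t) * (1 - (k : ℝ) / t) := by
      have h1 : 0 < (k : ℝ) / t := by positivity
      have h2 : (k : ℝ) / t < 1 := (div_lt_one htR).mpr hktR
      nlinarith
    have hzlb : 4 * ((k : ℝ) / t) * (1 - (k : ℝ) / t) ≤ ‖z - 1‖ := by
      rw [hzsub]; linarith
    have hb : 0 < ‖z - 1‖ := norm_pos_iff.mpr (sub_ne_zero.mpr hz1)
    have hGle : ‖G k‖ ≤ 2 / ‖z - 1‖ := by
      rw [hGz, norm_mul]
      have hnz : ‖z‖ = 1 := norm_ee t _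
      rw [hnz, one_mul, geom_sum_eq hz1, norm_div]
      have hnum : ‖z ^ N - 1‖ ≤ 2 := by
        calc ‖z ^ N - 1‖ ≤ ‖z ^ N‖ + ‖(1 : ℂ)‖ := norm_sub_le _ _
          _ = 2 := by rw [norm_pow, hnz, one_pow, norm_one]; norm_num
      gcongr
    have hkne : (k : ℝ) ≠ 0 := hkR.ne'
    have htkne : (t : ℝ) - k ≠ 0 := by linarith
    calc ‖G k‖ ≤ 2 / ‖z - 1‖ := hGle
      _ ≤ 2 / (4 * ((k : ℝ) / t) * (1 - (k : ℝ) / t)) :=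
          div_le_div_of_nonneg_left (by norm_num) hzpos hzlb
      _ = (t : ℝ) / 2 * (1 / (k : ℝ) + 1 / ((t : ℝ) - (k : ℝ))) := by
          field_simp
          ring
  -- total bound on the sum of |G k|
  have hsumG : ∑ k ∈ range t, ‖G k‖ ≤ (t : ℝ) * (2 + Real.log t) := by
    have hsplit : ∑ k ∈ range t, ‖G k‖ = ‖G 0‖ + ∑ k ∈ Finset.Ico 1 t, ‖G k‖ := by
      rw [Finset.range_eq_Ico, Finset.sum_eq_sum_Ico_succ_bot (by omega : 0 < t)]
    rw [hsplit]
    have h2 : ∑ k ∈ Finset.Ico 1 t, ‖G k‖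
        ≤ ∑ k ∈ Finset.Ico 1 t, (t : ℝ) / 2 * (1 / (k : ℝ) + 1 / ((t : ℝ) - (k : ℝ))) :=
      Finset.sum_le_sum hGk
    have h3 : ∑ k ∈ Finset.Ico 1 t, (t : ℝ) / 2 * (1 / (k : ℝ) + 1 / ((t : ℝ) - (k : ℝ)))
        ≤ (t : ℝ) * (1 + Real.log t) := by
      have hsplit2 : ∑ k ∈ Finset.Ico 1 t, (t : ℝ) / 2 * (1 / (k : ℝ) + 1 / ((t : ℝ) - (k : ℝ)))
          = (t : ℝ) / 2 * (∑ k ∈ Finset.Ico 1 t, 1 / (k : ℝ)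
              + ∑ k ∈ Finset.Ico 1 t, 1 / ((t : ℝ) - (k : ℝ))) := by
        rw [← Finset.sum_add_distrib, Finset.mul_sum]
      have hrefl : ∑ k ∈ Finset.Ico 1 t, 1 / ((t : ℝ) - (k : ℝ))
          = ∑ k ∈ Finset.Ico 1 t, 1 / (k : ℝ) := by
        have hterm : ∀ k ∈ Finset.Ico 1 t, 1 / ((t : ℝ) - (k : ℝ)) = 1 / (((t - k : ℕ)) : ℝ) := by
          intro k hk
          obtain ⟨hk1, hk2⟩ := Finset.mem_Ico.mp hk
          congr 1
          rw [Nat.cast_sub hk2.le]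
        rw [Finset.sum_congr rfl hterm]
        exact sum_reflect t (fun j => 1 / (j : ℝ))
      rw [hsplit2, hrefl]
      have hh := harmonic_sum_bound t ht
      have hHnn : (0 : ℝ) ≤ ∑ k ∈ Finset.Ico 1 t, 1 / (k : ℝ) := by positivity
      nlinarith
    linarith [hG0]
  -- combine everything
  have hnorm : ‖∑ m ∈ Finset.Icc 1 N, ep p ((l : ZMod p) * (g : ZMod p) ^ m)‖
      ≤ M * (2 + Real.log t) := by
    rw [hsum, norm_mul]
    have h1 : ‖(1 / (t : ℂ))‖ = 1 / (t : ℝ) := by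
      rw [norm_div, norm_one, Complex.norm_natCast]
    rw [h1]
    have h2 : ‖∑ k ∈ range t, G k * S k‖ ≤ M * ∑ k ∈ range t, ‖G k‖ := by
      calc ‖∑ k ∈ range t, G k * S k‖ ≤ ∑ k ∈ range t, ‖G k * S k‖ := norm_sum_le _ _
        _ = ∑ k ∈ range t, ‖G k‖ * ‖S k‖ :=
            Finset.sum_congr rfl (fun k _ => norm_mul _ _)
        _ ≤ ∑ k ∈ range t, ‖G k‖ * M :=
            Finset.sum_le_sum (fun k _ => mul_le_mul_of_nonneg_left (hSk k) (norm_nonneg _))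
        _ = M * ∑ k ∈ range t, ‖G k‖ := by rw [← Finset.sum_mul]; ring
    calc (1 / (t : ℝ)) * ‖∑ k ∈ range t, G k * S k‖
        ≤ (1 / (t : ℝ)) * (M * ((t : ℝ) * (2 + Real.log t))) := by
          apply mul_le_mul_of_nonneg_left _ (by positivity)
          exact le_trans h2 (mul_le_mul_of_nonneg_left hsumG hM0)
      _ = M * (2 + Real.log t) := by
          field_simp
  have hlog : (1 / 2 : ℝ) ≤ Real.log t := by
    have h2t : Real.log 2 ≤ Real.log t := by
      apply Real.log_le_log (by norm_num)
      exact_mod_cast ht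
    linarith [Real.log_two_gt_d9]
  have hMeq : M = (p : ℝ) ^ ((1 : ℝ) / 4) * (t : ℝ) ^ (-(1 : ℝ) / 4) * E ^ ((1 : ℝ) / 4) := by
    rw [hM, Real.div_rpow (by positivity) (le_of_lt htR),
      Real.mul_rpow (by positivity) hE0,
      show (-(1 : ℝ) / 4) = -((1 : ℝ) / 4) by ring, Real.rpow_neg (le_of_lt htR)]
    ring
  calc ‖∑ m ∈ Finset.Icc 1 N, ep p ((l : ZMod p) * (g : ZMod p) ^ m)‖
      ≤ M * (2 + Real.log t) := hnorm
    _ ≤ M * (5 * Real.log t) := by nlinarith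
    _ = 5 * (p : ℝ) ^ ((1 : ℝ) / 4) * (t : ℝ) ^ (-(1 : ℝ) / 4) * E ^ ((1 : ℝ) / 4)
        * Real.log t := by rw [hMeq]; ring
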